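/- With the same setup as the two-soliton collision laws, the cross-overlap is preserved: |⟨u₁, u_{{1},2}⟩| = |⟨u_{{2},1}, u₂⟩|. -/

import Mathlib

open Complex Matrix BigOperators

noncomputable section

/-- Hermitian inner product on ℂ^m, linear in the first slot. -/
def herm {m : ℕ} (u v : Fin m → ℂ) : ℂ := ∑ a, u a * (starRingEnd ℂ) (v a)

lemma herm_conj {m : ℕ} (u v : Fin m → ℂ) :
    (starRingEnd ℂ) (herm u v) = herm v u := by
  simp only [herm, map_sum]
  exact Finset.sum_congr rfl fun a _ => by
    rw [_root_.map_mul, Complex.conj_conj]; ring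

lemma herm_right {m : ℕ} (u v w : Fin m → ℂ) (c d : ℂ) :
    herm u (fun a => c * (v a - d * w a)) =
      (starRingEnd ℂ) c * (herm u v - (starRingEnd ℂ) d * herm u w) := by
  simp only [herm, Finset.mul_sum, mul_sub, ← Finset.sum_sub_distrib]
  exact Finset.sum_congr rfl fun a _ => by
    simp only [_root_.map_mul, _root_.map_sub]; ring

lemma herm_left {m : ℕ} (u v w : Fin m → ℂ) (c d : ℂ) :
    herm (fun a => c * (v a - d * w a)) u =
      c * (herm v u - d * herm w u) := by
  simp only [herm, Finset.mul_sum, mul_sub, ← Finset.sum_sub_distrib]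
  exact Finset.sum_congr rfl fun a _ => by ring

theorem stmt12 {m : ℕ} (ζ₁ ζ₂ : ℂ) (h1 : 0 < ζ₁.im) (h2 : 0 < ζ₂.im) (hne : ζ₁ ≠ ζ₂)
    (u₁ u₂ : Fin m → ℂ) (hu1 : herm u₁ u₁ = 1) (hu2 : herm u₂ u₂ = 1) :
    let eneg : ℝ := (‖(ζ₁ - ζ₂) / (ζ₁ - (starRingEnd ℂ) ζ₂)‖)^2 *
      (1 + ((ζ₁ - (starRingEnd ℂ) ζ₁) * (ζ₂ - (starRingEnd ℂ) ζ₂)).re /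
        (‖ζ₁ - (starRingEnd ℂ) ζ₂‖)^2 * (‖herm u₁ u₂‖)^2)
    let u12 : Fin m → ℂ := fun a =>
      (((Real.sqrt eneg)⁻¹ : ℝ) : ℂ) *
        (((starRingEnd ℂ) ζ₁ - (starRingEnd ℂ) ζ₂) / (ζ₁ - (starRingEnd ℂ) ζ₂)) *
        (u₂ a - (ζ₁ - (starRingEnd ℂ) ζ₁) / (ζ₁ - (starRingEnd ℂ) ζ₂) *
          herm u₂ u₁ * u₁ a)
    let u21 : Fin m → ℂ := fun a =>
      (((Real.sqrt eneg)⁻¹ : ℝ) : ℂ) *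
        (((starRingEnd ℂ) ζ₂ - (starRingEnd ℂ) ζ₁) / (ζ₂ - (starRingEnd ℂ) ζ₁)) *
        (u₁ a - (ζ₂ - (starRingEnd ℂ) ζ₂) / (ζ₂ - (starRingEnd ℂ) ζ₁) *
          herm u₁ u₂ * u₂ a)
    ‖herm u₁ u12‖ = ‖herm u21 u₂‖ := by
  intro eneg u12 u21
  set e : ℝ := (Real.sqrt eneg)⁻¹ with he
  -- nonvanishing denominators
  have hd1 : ζ₁ - (starRingEnd ℂ) ζ₂ ≠ 0 := by
    intro hz
    have : (ζ₁ - (starRingEnd ℂ) ζ₂).im = 0 := by rw [hz]; simp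
    simp [Complex.sub_im, Complex.conj_im] at this
    linarith
  have hd1' : (starRingEnd ℂ) ζ₁ - ζ₂ ≠ 0 := by
    intro hz
    apply hd1
    have : (starRingEnd ℂ) ((starRingEnd ℂ) ζ₁ - ζ₂) = 0 := by rw [hz]; simp
    rw [map_sub, Complex.conj_conj] at this
    exact this
  have hd2 : ζ₂ - (starRingEnd ℂ) ζ₁ ≠ 0 := fun hz => hd1' (by
    have := neg_eq_zero.mpr hz; rw [neg_sub] at this; exact this)
  -- rewrite u12, u21 in the shape of the aux lemmas
  have e12 : herm u₁ u12 =
      (starRingEnd ℂ) ((e : ℂ) * (((starRingEnd ℂ) ζ₁ - (starRingEnd ℂ) ζ₂) / (ζ₁ - (starRingEnd ℂ) ζ₂))) *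
        (herm u₁ u₂ -
          (starRingEnd ℂ) ((ζ₁ - (starRingEnd ℂ) ζ₁) / (ζ₁ - (starRingEnd ℂ) ζ₂) * herm u₂ u₁) *
          herm u₁ u₁) := by
    rw [show herm u₁ u12 = herm u₁ (fun a =>
        ((e : ℂ) * (((starRingEnd ℂ) ζ₁ - (starRingEnd ℂ) ζ₂) / (ζ₁ - (starRingEnd ℂ) ζ₂))) *
        (u₂ a - ((ζ₁ - (starRingEnd ℂ) ζ₁) / (ζ₁ - (starRingEnd ℂ) ζ₂) * herm u₂ u₁) * u₁ a)) by
      rfl]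
    exact herm_right ..
  have e21 : herm u21 u₂ =
      ((e : ℂ) * (((starRingEnd ℂ) ζ₂ - (starRingEnd ℂ) ζ₁) / (ζ₂ - (starRingEnd ℂ) ζ₁))) *
        (herm u₁ u₂ -
          ((ζ₂ - (starRingEnd ℂ) ζ₂) / (ζ₂ - (starRingEnd ℂ) ζ₁) * herm u₁ u₂) *
          herm u₂ u₂) := by
    rw [show herm u21 u₂ = herm (fun a =>
        ((e : ℂ) * (((starRingEnd ℂ) ζ₂ - (starRingEnd ℂ) ζ₁) / (ζ₂ - (starRingEnd ℂ) ζ₁))) *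
        (u₁ a - ((ζ₂ - (starRingEnd ℂ) ζ₂) / (ζ₂ - (starRingEnd ℂ) ζ₁) * herm u₁ u₂) * u₂ a)) u₂ by
      rfl]
    exact herm_left ..
  have f1 : herm u₁ u12 =
      (e : ℂ) * ((ζ₁ - ζ₂)^2 / ((starRingEnd ℂ) ζ₁ - ζ₂)^2) * herm u₁ u₂ := by
    rw [e12, hu1]
    simp only [_root_.map_mul, map_div₀, map_sub, Complex.conj_conj, Complex.conj_ofReal,
      herm_conj]
    field_simp
    ring
  have f2 : herm u21 u₂ =
      (e : ℂ) * (((starRingEnd ℂ) ζ₂ - (starRingEnd ℂ) ζ₁)^2 / (ζ₂ - (starRingEnd ℂ) ζ₁)^2) *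
        herm u₁ u₂ := by
    rw [e21, hu2]
    field_simp
    ring
  rw [f1, f2]
  have habs1 : ‖(starRingEnd ℂ) ζ₂ - (starRingEnd ℂ) ζ₁‖ = ‖ζ₁ - ζ₂‖ := by
    rw [show (starRingEnd ℂ) ζ₂ - (starRingEnd ℂ) ζ₁ = (starRingEnd ℂ) (ζ₂ - ζ₁) by rw [map_sub],
      Complex.norm_conj, ← neg_sub, norm_neg]
  have habs2 : ‖ζ₂ - (starRingEnd ℂ) ζ₁‖ = ‖(starRingEnd ℂ) ζ₁ - ζ₂‖ := by
    rw [← neg_sub, norm_neg]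
  simp only [norm_mul, norm_div, norm_pow, habs1, habs2]

end
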